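/- arXiv:2604.27566 — 2 statements merged into one kernel-verified Lean document; each statement's English description precedes it below -/
import Mathlib

section
/- Let 𝒞 be an abelian category and let n ≥ 1 be an integer. Then the following two conditions are equivalent: (1) for every object M of 𝒞 and every short exact sequence 0 → A → B → C → 0 in 𝒞, the induced map Ext^n_𝒞(B,M) → Ext^n_𝒞(A,M) is surjective (i.e., the contravariant functor Ext^n_𝒞(−,M) is right exact for every M); (2) Ext^{n+1}_𝒞(A,M) = 0 for every pair of objects (A,M) of 𝒞. -/
open CategoryTheory CategoryTheory.Abelian CategoryTheory.Limits

universe w v u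

namespace ExtRightExactAux

variable {C : Type u} [Category.{v} C] [Abelian C] [HasExt.{w} C]

open HomologicalComplex

/-- Every positive-degree Ext class is killed by pullback along some epimorphism. -/
lemma exists_epi_comp_eq_zero {A M : C} {m : ℕ} (hm : 1 ≤ m) (e : Ext A M m) :
    ∃ (B : C) (p : B ⟶ A), Epi p ∧ (Ext.mk₀ p).comp e (zero_add m) = 0 := by
  letI := HasDerivedCategory.standard C
  let SA := (HomologicalComplex.single C (ComplexShape.up ℤ) 0).obj A
  let SM := (HomologicalComplex.single C (ComplexShape.up ℤ) 0).obj M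
  let Qt := HomotopyCategory.quotient C (ComplexShape.up ℤ)
  let W := (HomotopyCategory.subcategoryAcyclic C).trW
  -- the morphism in the derived category
  let f : DerivedCategory.Qh.obj (Qt.obj SA) ⟶
      DerivedCategory.Qh.obj ((Qt.obj SM)⟦(m : ℤ)⟧) :=
    e.hom ≫ ((DerivedCategory.Qh.commShiftIso (m : ℤ)).inv.app (Qt.obj SM))
  obtain ⟨φ, hφ⟩ := Localization.exists_rightFraction DerivedCategory.Qh W f
  -- chain level representatives
  let X : CochainComplex C ℤ := φ.X'.as
  obtain ⟨σ, hσ⟩ := Qt.map_surjective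
    (show Qt.obj X ⟶ Qt.obj SA from φ.s)
  obtain ⟨γ, hγ⟩ := Qt.map_surjective
    (show Qt.obj X ⟶ Qt.obj (SM⟦(m : ℤ)⟧) from
      φ.f ≫ ((Qt.commShiftIso (m : ℤ)).inv.app SM))
  replace hσ : Qt.map σ = φ.s := hσ
  replace hγ : Qt.map γ = φ.f ≫ ((Qt.commShiftIso (m : ℤ)).inv.app SM) := hγ
  have hqis : QuasiIso σ := by
    have h0 : HomotopyCategory.quasiIso C (ComplexShape.up ℤ) (Qt.map σ) := by
      rw [hσ, HomotopyCategory.quasiIso_eq_trW_subcategoryAcyclic]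
      exact φ.hs
    rwa [HomotopyCategory.quotient_map_mem_quasiIso_iff,
      HomologicalComplex.mem_quasiIso_iff] at h0
  -- the epimorphism
  let B : C := X.cycles 0
  let p : B ⟶ A := X.iCycles 0 ≫ σ.f 0 ≫
    (singleObjXSelf (ComplexShape.up ℤ) 0 A).hom
  have hp : Epi p := by
    have h1 : IsIso (homologyMap σ 0) := by
      have := hqis.quasiIsoAt 0
      rwa [quasiIsoAt_iff_isIso_homologyMap] at this
    have h2 : IsIso (SA.homologyπ 0) := by
      apply SA.isIso_homologyπ ((ComplexShape.up ℤ).prev 0) 0 rfl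
      exact HomologicalComplex.single_obj_d _ _ _ _ _
    have h3 : IsIso (SA.iCycles 0) := by
      apply SA.isIso_iCycles 0 ((ComplexShape.up ℤ).next 0) rfl
      exact HomologicalComplex.single_obj_d _ _ _ _ _
    have e1 : Epi (cyclesMap σ 0 ≫ SA.homologyπ 0) := by
      rw [← homologyπ_naturality]
      infer_instance
    have e2 : Epi (cyclesMap σ 0) := by
      have : cyclesMap σ 0 = (cyclesMap σ 0 ≫ SA.homologyπ 0) ≫
          inv (SA.homologyπ 0) := by simp
      rw [this]; infer_instance
    have : p = cyclesMap σ 0 ≫ (SA.iCycles 0 ≫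
        (singleObjXSelf (ComplexShape.up ℤ) 0 A).hom) := by
      simp only [p, ← Category.assoc, cyclesMap_i]
    rw [this]
    infer_instance
  refine ⟨B, p, hp, ?_⟩
  -- chain map from the single complex in degree 0
  let t : (HomologicalComplex.single C (ComplexShape.up ℤ) 0).obj B ⟶ X :=
    mkHomFromSingle (X.iCycles 0) (fun k _ => X.iCycles_d 0 k)
  have hts : (HomologicalComplex.single C (ComplexShape.up ℤ) 0).map p = t ≫ σ := by
    apply HomologicalComplex.hom_ext
    intro i
    by_cases hi : i = 0
    · subst hi
      simp [single_map_f_self, t, mkHomFromSingle_f, p]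
    · apply (isZero_single_obj_X (ComplexShape.up ℤ) 0 B i hi).eq_of_src
  have htγ : t ≫ γ = 0 := by
    apply HomologicalComplex.hom_ext
    intro i
    by_cases hi : i = 0
    · subst hi
      exact (isZero_single_obj_X (ComplexShape.up ℤ) 0 M ((0 : ℤ) + (m : ℤ))
        (by omega)).eq_of_tgt _ _
    · apply (isZero_single_obj_X (ComplexShape.up ℤ) 0 B i hi).eq_of_src
  -- conclude in the derived category
  apply Ext.ext
  rw [Ext.comp_hom, Ext.mk₀_hom, Ext.zero_hom, ShiftedHom.mk₀_comp]
  have key : (DerivedCategory.singleFunctor C 0).map p =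
      DerivedCategory.Qh.map (Qt.map
        ((HomologicalComplex.single C (ComplexShape.up ℤ) 0).map p)) := rfl
  rw [key, hts]
  change (DerivedCategory.Qh.map (Qt.map (t ≫ σ)) ≫ e.hom : DerivedCategory.Qh.obj (Qt.obj ((HomologicalComplex.single C (ComplexShape.up ℤ) 0).obj B)) ⟶
      (DerivedCategory.Qh ⋙ shiftFunctor (DerivedCategory C) (m : ℤ)).obj (Qt.obj SM)) = 0
  have ehom : e.hom = f ≫ ((DerivedCategory.Qh.commShiftIso (m : ℤ)).hom.app (Qt.obj SM)) := by
    simp only [f, Category.assoc, Iso.inv_hom_id_app]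
    erw [Category.assoc, Iso.inv_hom_id_app, Category.comp_id]
  have hφf : φ.f = Qt.map γ ≫ ((Qt.commShiftIso (m : ℤ)).hom.app SM) := by
    rw [hγ]
    erw [Category.assoc, Iso.inv_hom_id_app, Category.comp_id]
  rw [ehom, Functor.map_comp, Functor.map_comp, Category.assoc, hφ]
  rw [hσ]
  erw [MorphismProperty.RightFraction.map_s_comp_map_assoc]
  rw [hφf]
  erw [Functor.map_comp]
  have h0 : DerivedCategory.Qh.map (Qt.map t) ≫ DerivedCategory.Qh.map (Qt.map γ) = 0 := by
    rw [← Functor.map_comp, ← Qt.map_comp, htγ]; simp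
  erw [Category.assoc, reassoc_of% h0]
  simp

end ExtRightExactAux

/-- Theorem (Yoneda Ext criterion, contravariant form): in an abelian category `C`,
for `n ≥ 1`, the contravariant functor `Ext^n(-, M)` is right exact for every `M`
(i.e. for every short exact sequence `0 → A → B → C → 0`, the induced map
`Ext^n(B, M) → Ext^n(A, M)` is surjective) if and only if `Ext^(n+1)(A, M) = 0`
for all objects `A`, `M`. -/
theorem stmt_1 {C : Type u} [Category.{v} C] [Abelian C] [HasExt.{w} C]
    (n : ℕ) (hn : 1 ≤ n) :
    (∀ (M : C) (S : ShortComplex C), S.ShortExact →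
      Function.Surjective
        (fun e : Ext S.X₂ M n => (Ext.mk₀ S.f).comp e (zero_add n))) ↔
    (∀ (A M : C) (e : Ext A M (n + 1)), e = 0) := by
  constructor
  · intro h A M e
    obtain ⟨B, p, hp, hcomp⟩ := ExtRightExactAux.exists_epi_comp_eq_zero
      (by omega : 1 ≤ n + 1) e
    let S : ShortComplex C := ShortComplex.mk (kernel.ι p) p (kernel.condition p)
    have hS : S.ShortExact :=
      { exact := ShortComplex.exact_of_f_is_kernel _ (kernelIsKernel p)
        mono_f := inferInstance
        epi_g := hp }
    obtain ⟨y, hy⟩ := Ext.contravariant_sequence_exact₃ hS M e hcomp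
      (by omega : 1 + n = n + 1)
    obtain ⟨z, hz⟩ := h M S hS y
    rw [← hy, ← hz]
    simp only []
    rw [ShortComplex.ShortExact.extClass_comp_assoc]
  · intro h M S hS x₁
    obtain ⟨x₂, hx₂⟩ := Ext.contravariant_sequence_exact₁ hS M x₁
      (by omega : 1 + n = n + 1) (h _ _ _)
    exact ⟨x₂, hx₂⟩
end

section
/- Let 𝒞 be an abelian category and let n ≥ 1 be an integer. Then the following two conditions are equivalent: (1) for every object M of 𝒞 and every short exact sequence 0 → A → B → C → 0 in 𝒞, the induced map Ext^n_𝒞(M,B) → Ext^n_𝒞(M,C) is surjective; (2) for every object M of 𝒞 and every short exact sequence 0 → A → B → C → 0 in 𝒞, the induced map Ext^n_𝒞(B,M) → Ext^n_𝒞(A,M) is surjective. -/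
open CategoryTheory CategoryTheory.Abelian

universe w v u

namespace ExtRightExactAux

open CategoryTheory.Limits HomologicalComplex

variable {C : Type u} [Category.{v} C] [Abelian C] [HasExt.{w} C]

/-- Every positive-degree Ext class is killed by precomposition with some epimorphism. -/
lemma exists_epi_comp_eq_zero_s14 {X Y : C} {n : ℕ} (hn : n ≠ 0) (α : Ext X Y n) :
    ∃ (E : C) (p : E ⟶ X), Epi p ∧ (Ext.mk₀ p).comp α (zero_add n) = 0 := by
  letI := HasDerivedCategory.standard C
  haveI : (HomotopyCategory.quasiIso C (ComplexShape.up ℤ)).HasRightCalculusOfFractions := by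
    rw [HomotopyCategory.quasiIso_eq_subcategoryAcyclic_W]
    infer_instance
  let e := (DerivedCategory.singleFunctors C).shiftIso (n : ℤ) (-(n : ℤ)) 0 (by omega)
  obtain ⟨φ, hφ⟩ := Localization.exists_rightFraction DerivedCategory.Qh
    (HomotopyCategory.quasiIso C (ComplexShape.up ℤ))
    (X := (HomotopyCategory.quotient C (ComplexShape.up ℤ)).obj
        ((single C (ComplexShape.up ℤ) 0).obj X))
    (Y := (HomotopyCategory.quotient C (ComplexShape.up ℤ)).obj
        ((single C (ComplexShape.up ℤ) (-(n : ℤ))).obj Y))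
    (α.hom ≫ e.hom.app Y)
  obtain ⟨sc, hsc⟩ := (HomotopyCategory.quotient C (ComplexShape.up ℤ)).map_surjective
    (X := φ.X'.as) (Y := (single C (ComplexShape.up ℤ) 0).obj X) φ.s
  obtain ⟨fc, hfc⟩ := (HomotopyCategory.quotient C (ComplexShape.up ℤ)).map_surjective
    (X := φ.X'.as) (Y := (single C (ComplexShape.up ℤ) (-(n : ℤ))).obj Y) φ.f
  have hsc' : QuasiIso sc := by
    rw [← HomologicalComplex.mem_quasiIso_iff,
      ← HomotopyCategory.quotient_map_mem_quasiIso_iff, hsc]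
    exact φ.hs
  -- the chain map from the single complex on the cocycles in degree 0
  set ι : (single C (ComplexShape.up ℤ) 0).obj (φ.X'.as.cycles 0) ⟶ φ.X'.as :=
    mkHomFromSingle (φ.X'.as.iCycles 0) (fun k _ => φ.X'.as.iCycles_d 0 k) with hιdef
  set p : φ.X'.as.cycles 0 ⟶ X :=
    φ.X'.as.iCycles 0 ≫ sc.f 0 ≫ (singleObjXSelf (ComplexShape.up ℤ) 0 X).hom with hpdef
  have ha : ι ≫ sc = (single C (ComplexShape.up ℤ) 0).map p := by
    apply from_single_hom_ext
    simp [hιdef, hpdef, single_map_f_self]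
  have hc : ι ≫ fc = 0 := by
    apply from_single_hom_ext
    exact (isZero_single_obj_X (ComplexShape.up ℤ) (-(n : ℤ)) Y 0
      (by omega)).eq_of_tgt _ _
  haveI : IsIso (homologyMap sc 0) := by
    rw [← quasiIsoAt_iff_isIso_homologyMap]
    infer_instance
  have hp : φ.X'.as.homologyπ 0 ≫ homologyMap sc 0 ≫
      (singleObjHomologySelfIso (ComplexShape.up ℤ) 0 X).hom = p := by
    rw [homologyπ_naturality_assoc, homologyπ_singleObjHomologySelfIso_hom,
      singleObjCyclesSelfIso_hom, cyclesMap_i_assoc, hpdef]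
  have hEpi : Epi p := by
    rw [← hp]
    infer_instance
  refine ⟨φ.X'.as.cycles 0, p, hEpi, ?_⟩
  apply Ext.ext
  rw [← Ext.singleFunctor_map_comp_hom (C := C) p α, Ext.zero_hom]
  erw [← cancel_mono (e.hom.app Y), zero_comp, Category.assoc, hφ]
  have hm : (DerivedCategory.singleFunctor C 0).map p =
      DerivedCategory.Qh.map ((HomotopyCategory.quotient C (ComplexShape.up ℤ)).map (ι ≫ sc)) := by
    rw [ha]; rfl
  erw [hm, Functor.map_comp, Functor.map_comp, hsc, Category.assoc,
    MorphismProperty.RightFraction.map_s_comp_map, ← hfc,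
    ← Functor.map_comp, ← Functor.map_comp, hc]
  simp
  rfl

/-- Every positive-degree Ext class is killed by postcomposition with some monomorphism. -/
lemma exists_mono_comp_eq_zero {X Y : C} {n : ℕ} (hn : n ≠ 0) (α : Ext X Y n) :
    ∃ (E : C) (i : Y ⟶ E), Mono i ∧ α.comp (Ext.mk₀ i) (add_zero n) = 0 := by
  letI := HasDerivedCategory.standard C
  haveI : (HomotopyCategory.quasiIso C (ComplexShape.up ℤ)).HasLeftCalculusOfFractions := by
    rw [HomotopyCategory.quasiIso_eq_subcategoryAcyclic_W]
    infer_instance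
  let e := (DerivedCategory.singleFunctors C).shiftIso (n : ℤ) (-(n : ℤ)) 0 (by omega)
  obtain ⟨φ, hφ⟩ := Localization.exists_leftFraction DerivedCategory.Qh
    (HomotopyCategory.quasiIso C (ComplexShape.up ℤ))
    (X := (HomotopyCategory.quotient C (ComplexShape.up ℤ)).obj
        ((single C (ComplexShape.up ℤ) 0).obj X))
    (Y := (HomotopyCategory.quotient C (ComplexShape.up ℤ)).obj
        ((single C (ComplexShape.up ℤ) (-(n : ℤ))).obj Y))
    (α.hom ≫ e.hom.app Y)
  obtain ⟨fc, hfc⟩ := (HomotopyCategory.quotient C (ComplexShape.up ℤ)).map_surjective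
    (X := (single C (ComplexShape.up ℤ) 0).obj X) (Y := φ.Y'.as) φ.f
  obtain ⟨sc, hsc⟩ := (HomotopyCategory.quotient C (ComplexShape.up ℤ)).map_surjective
    (X := (single C (ComplexShape.up ℤ) (-(n : ℤ))).obj Y) (Y := φ.Y'.as) φ.s
  have hsc' : QuasiIso sc := by
    rw [← HomologicalComplex.mem_quasiIso_iff,
      ← HomotopyCategory.quotient_map_mem_quasiIso_iff, hsc]
    exact φ.hs
  -- the chain map to the single complex on the opcycles in degree -n
  set ψc : φ.Y'.as ⟶ (single C (ComplexShape.up ℤ) (-(n : ℤ))).obj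
      (φ.Y'.as.opcycles (-(n : ℤ))) :=
    mkHomToSingle (φ.Y'.as.pOpcycles (-(n : ℤ))) (fun k _ => φ.Y'.as.d_pOpcycles k _) with hψdef
  set i₀ : Y ⟶ φ.Y'.as.opcycles (-(n : ℤ)) :=
    (singleObjXSelf (ComplexShape.up ℤ) (-(n : ℤ)) Y).inv ≫ sc.f (-(n : ℤ)) ≫
      φ.Y'.as.pOpcycles (-(n : ℤ)) with hi₀def
  have ha : sc ≫ ψc = (single C (ComplexShape.up ℤ) (-(n : ℤ))).map i₀ := by
    apply to_single_hom_ext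
    simp [hψdef, hi₀def, single_map_f_self]
  have hc : fc ≫ ψc = 0 := by
    apply to_single_hom_ext
    exact (isZero_single_obj_X (ComplexShape.up ℤ) 0 X (-(n : ℤ))
      (by omega)).eq_of_src _ _
  haveI : IsIso (homologyMap sc (-(n : ℤ))) := by
    rw [← quasiIsoAt_iff_isIso_homologyMap]
    infer_instance
  have hi : (singleObjHomologySelfIso (ComplexShape.up ℤ) (-(n : ℤ)) Y).inv ≫
      homologyMap sc (-(n : ℤ)) ≫ φ.Y'.as.homologyι (-(n : ℤ)) = i₀ := by
    rw [homologyι_naturality, singleObjHomologySelfIso_inv_homologyι_assoc,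
      singleObjOpcyclesSelfIso_hom, Category.assoc, p_opcyclesMap, hi₀def]
  have hMono : Mono i₀ := by
    rw [← hi]
    infer_instance
  refine ⟨φ.Y'.as.opcycles (-(n : ℤ)), i₀, hMono, ?_⟩
  apply Ext.ext
  rw [← Ext.hom_comp_singleFunctor_map_shift (C := C), Ext.zero_hom]
  rw [← cancel_mono (e.hom.app (φ.Y'.as.opcycles (-(n : ℤ)))), zero_comp, Category.assoc]
  have nat := e.hom.naturality i₀
  simp only [Functor.comp_map] at nat
  erw [nat, ← Category.assoc, hφ]
  have hmi : DerivedCategory.Qh.map φ.s ≫ DerivedCategory.Qh.map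
      ((HomotopyCategory.quotient C (ComplexShape.up ℤ)).map ψc) =
      (DerivedCategory.singleFunctor C (-(n : ℤ))).map i₀ := by
    erw [← hsc, ← Functor.map_comp, ← Functor.map_comp, ha]; rfl
  erw [← hmi, ← Category.assoc, MorphismProperty.LeftFraction.map_comp_map_s, ← hfc,
    ← Functor.map_comp, ← Functor.map_comp, hc]
  simp
  rfl

end ExtRightExactAux

/-- For an abelian category `C` and `n ≥ 1`, the covariant functors `Ext^n(M, -)`
are right exact for all `M` if and only if the contravariant functors `Ext^n(-, M)`
are right exact for all `M`. -/
theorem stmt_14 {C : Type u} [Category.{v} C] [Abelian C] [HasExt.{w} C]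
    (n : ℕ) (hn : 1 ≤ n) :
    (∀ (M : C) (S : ShortComplex C), S.ShortExact →
      Function.Surjective
        (fun e : Ext M S.X₂ n => e.comp (Ext.mk₀ S.g) (add_zero n))) ↔
    (∀ (M : C) (S : ShortComplex C), S.ShortExact →
      Function.Surjective
        (fun e : Ext S.X₂ M n => (Ext.mk₀ S.f).comp e (zero_add n))) := by
  open CategoryTheory.Limits in
  obtain ⟨m, rfl⟩ : ∃ m, n = m + 1 := ⟨n - 1, by omega⟩
  constructor
  · intro h1 M S hS ξ
    -- find a monomorphism killing ξ, and factor ξ through an extension class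
    obtain ⟨E, i, hi, hzero⟩ := ExtRightExactAux.exists_mono_comp_eq_zero (by omega) ξ
    haveI := hi
    have hT : (ShortComplex.mk i (cokernel.π i) (cokernel.condition i)).ShortExact :=
      { exact := ShortComplex.exact_cokernel i }
    obtain ⟨ζ, hζ⟩ := Ext.covariant_sequence_exact₁ S.X₁ hT ξ hzero rfl
    have hx : hS.extClass.comp ξ (show 1 + (m + 1) = (m + 1) + 1 by omega) = 0 := by
      rw [← hζ, ← Ext.comp_assoc hS.extClass ζ hT.extClass
        (show 1 + m = m + 1 by omega) rfl (by omega)]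
      obtain ⟨ε, hε⟩ := h1 S.X₃ _ hT (hS.extClass.comp ζ (show 1 + m = m + 1 by omega))
      dsimp at hε
      rw [← hε, Ext.comp_assoc ε (Ext.mk₀ _) hT.extClass (add_zero (m + 1))
        (zero_add 1) (by omega), hT.comp_extClass, Ext.comp_zero]
    obtain ⟨x₂, hx₂⟩ := Ext.contravariant_sequence_exact₁ hS M ξ
      (show 1 + (m + 1) = (m + 1) + 1 by omega) hx
    exact ⟨x₂, hx₂⟩
  · intro h2 M S hS x₃
    -- find an epimorphism killing x₃, and factor x₃ through an extension class
    obtain ⟨E, p, hp, hzero⟩ := ExtRightExactAux.exists_epi_comp_eq_zero_s14 (by omega) x₃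
    haveI := hp
    have hT : (ShortComplex.mk (kernel.ι p) p (kernel.condition p)).ShortExact :=
      { exact := ShortComplex.exact_kernel p }
    obtain ⟨x₁, hx₁⟩ := Ext.contravariant_sequence_exact₃ hT S.X₃ x₃ hzero (show 1 + m = m + 1 by omega)
    have hx : x₃.comp hS.extClass (show (m + 1) + 1 = (m + 1) + 1 by omega) = 0 := by
      rw [← hx₁, Ext.comp_assoc hT.extClass x₁ hS.extClass (show 1 + m = m + 1 by omega)
        (show m + (1 : ℕ) = m + 1 by omega) (by omega)]
      obtain ⟨ε, hε⟩ := h2 S.X₁ _ hT (x₁.comp hS.extClass (show m + 1 = m + 1 by omega))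
      dsimp at hε
      rw [← hε, ← Ext.comp_assoc hT.extClass (Ext.mk₀ _) _ (add_zero 1)
        (zero_add (m + 1)) (by omega), hT.extClass_comp, Ext.zero_comp]
    obtain ⟨x₂, hx₂⟩ := Ext.covariant_sequence_exact₃ M hS x₃ rfl hx
    exact ⟨x₂, hx₂⟩
end
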